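/- Let α ≥ 1/2, λ > 0, r > 0. If X ~ Gamma(α, λ₁), then X_r = G + (√(rX) + N/√(2λ))² is gamma distributed with shape α and rate λ_r = (r/λ₁ + 1/λ)^{-1}. -/

import Mathlib

open MeasureTheory ProbabilityTheory Real

/-- polynomials are integrable w.r.t. a finite measure concentrated on `[0,1]`. -/
lemma integrable_poly_aux (m : Measure ℝ) [IsFiniteMeasure m]
    (hm : ∀ᵐ x ∂m, x ∈ Set.Icc (0:ℝ) 1) (p : Polynomial ℝ) :
    Integrable (fun x => p.eval x) m := by
  obtain ⟨C, hC⟩ := (isCompact_Icc (a := (0:ℝ)) (b := 1)).exists_bound_of_continuousOn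
    p.continuous_aeval.continuousOn
  refine (integrable_const C).mono' p.continuous_aeval.measurable.aestronglyMeasurable ?_
  filter_upwards [hm] with x hx
  simpa using hC x hx

lemma laplace_unique (μ ν : Measure ℝ) [IsFiniteMeasure μ] [IsFiniteMeasure ν]
    (hμ0 : μ (Set.Iio 0) = 0) (hν0 : ν (Set.Iio 0) = 0)
    (h : ∀ n : ℕ, ∫⁻ x, ENNReal.ofReal (Real.exp (-((n : ℝ) * x))) ∂μ =
      ∫⁻ x, ENNReal.ofReal (Real.exp (-((n : ℝ) * x))) ∂ν) : μ = ν := by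
  set T : ℝ → ℝ := fun x => Real.exp (-x) with hT
  have hTmeas : Measurable T := (measurable_id.neg).exp
  have hTinj : Function.Injective T := fun a b hab => by
    have := Real.exp_injective hab
    linarith [neg_injective this]
  set μ' := μ.map T with hμ'
  set ν' := ν.map T with hν'
  have hae : ∀ (m : Measure ℝ), m (Set.Iio 0) = 0 → (∀ᵐ x ∂ (m.map T), x ∈ Set.Icc (0:ℝ) 1) := by
    intro m hm0
    refine (MeasureTheory.ae_map_iff hTmeas.aemeasurable measurableSet_Icc).2 ?_
    have : ∀ᵐ x ∂m, (0:ℝ) ≤ x := by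
      rw [ae_iff]
      simpa [Set.Iio] using hm0
    filter_upwards [this] with x hx
    exact ⟨(Real.exp_pos _).le, Real.exp_le_one_iff.2 (by linarith)⟩
  have haeμ' := hae μ hμ0
  have haeν' := hae ν hν0
  -- moments agree
  have hmom : ∀ n : ℕ, ∫ x, x ^ n ∂μ' = ∫ x, x ^ n ∂ν' := by
    intro n
    have hpow : ∀ (m : Measure ℝ), ∫ x, x ^ n ∂(m.map T) = ∫ x, Real.exp (-((n:ℝ) * x)) ∂m := by
      intro m
      rw [integral_map hTmeas.aemeasurable (measurable_id'.pow_const n).aestronglyMeasurable]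
      congr 1 with x
      rw [hT]
      rw [← Real.exp_nat_mul]
      ring_nf
    have hlin : ∀ (m : Measure ℝ), ∫ x, Real.exp (-((n:ℝ) * x)) ∂m =
        (∫⁻ x, ENNReal.ofReal (Real.exp (-((n : ℝ) * x))) ∂m).toReal := by
      intro m
      rw [integral_eq_lintegral_of_nonneg_ae (Filter.Eventually.of_forall fun x => (Real.exp_pos _).le)
        (by fun_prop : Measurable fun x : ℝ => Real.exp (-((n:ℝ) * x))).aestronglyMeasurable]
    rw [hpow, hpow, hlin, hlin, h n]
  -- polynomial integrals agree
  have hpoly : ∀ p : Polynomial ℝ, ∫ x, p.eval x ∂μ' = ∫ x, p.eval x ∂ν' := by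
    intro p
    induction p using Polynomial.induction_on' with
    | add p q hp hq =>
      simp only [Polynomial.eval_add]
      rw [integral_add (integrable_poly_aux μ' haeμ' p) (integrable_poly_aux μ' haeμ' q),
        integral_add (integrable_poly_aux ν' haeν' p) (integrable_poly_aux ν' haeν' q), hp, hq]
    | monomial n a =>
      simp only [Polynomial.eval_monomial]
      simp_rw [← smul_eq_mul]
      rw [integral_smul, integral_smul, hmom n]
  -- transfer to all bounded continuous functions
  have hmain : μ' = ν' := by
    apply ext_of_forall_lintegral_eq_of_IsFiniteMeasure
    intro f
    have hfi : ∀ (m : Measure ℝ) [IsFiniteMeasure m], Integrable (fun x => (f x : ℝ)) m := by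
      intro m _
      exact BoundedContinuousFunction.integrable_of_nnreal m f
    suffices hreal : ∫ x, (f x : ℝ) ∂μ' = ∫ x, (f x : ℝ) ∂ν' by
      have h1 := BoundedContinuousFunction.toReal_lintegral_coe_eq_integral f μ'
      have h2 := BoundedContinuousFunction.toReal_lintegral_coe_eq_integral f ν'
      have f1 := BoundedContinuousFunction.lintegral_lt_top_of_nnreal μ' f
      have f2 := BoundedContinuousFunction.lintegral_lt_top_of_nnreal ν' f
      exact (ENNReal.toReal_eq_toReal_iff' f1.ne f2.ne).1 (by rw [h1, h2, hreal])
    set M : ℝ := (μ' Set.univ).toReal + (ν' Set.univ).toReal with hM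
    have hM0 : 0 ≤ M := by positivity
    have key : ∀ ε > (0:ℝ), |∫ x, (f x : ℝ) ∂μ' - ∫ x, (f x : ℝ) ∂ν'| ≤ ε := by
      intro ε hε
      set ε' : ℝ := ε / (M + 1) with hε'def
      have hε' : 0 < ε' := by positivity
      -- Stone-Weierstrass on Icc 0 1
      set fc : C(Set.Icc (0:ℝ) 1, ℝ) :=
        ⟨fun x => (f x : ℝ), (NNReal.continuous_coe.comp f.continuous).comp continuous_subtype_val⟩
        with hfc
      obtain ⟨g, hg⟩ := ContinuousMap.exists_mem_subalgebra_near_continuousMap_of_separatesPoints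
        (polynomialFunctions (Set.Icc (0:ℝ) 1)) (polynomialFunctions_separatesPoints _) fc ε' hε'
      have hgmem : (g : C(Set.Icc (0:ℝ) 1, ℝ)) ∈ (polynomialFunctions (Set.Icc (0:ℝ) 1) : Set _) := g.2
      rw [polynomialFunctions_coe] at hgmem
      obtain ⟨p, hp⟩ := hgmem
      have hnear : ∀ x : ℝ, x ∈ Set.Icc (0:ℝ) 1 → |(f x : ℝ) - p.eval x| ≤ ε' := by
        intro x hx
        have := ((g : C(Set.Icc (0:ℝ) 1, ℝ)) - fc).norm_coe_le_norm ⟨x, hx⟩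
        have h2 : |(g : C(Set.Icc (0:ℝ) 1, ℝ)) ⟨x, hx⟩ - (f x : ℝ)| ≤ ε' := by
          refine le_trans ?_ hg.le
          simp [Real.norm_eq_abs] at this; exact this
        have h3 : (g : C(Set.Icc (0:ℝ) 1, ℝ)) ⟨x, hx⟩ = p.eval x := by
          rw [← hp]; rfl
        rw [h3] at h2
        rw [abs_sub_comm]
        exact h2
      have est : ∀ (m : Measure ℝ) [IsFiniteMeasure m], (∀ᵐ x ∂m, x ∈ Set.Icc (0:ℝ) 1) →
          |∫ x, (f x : ℝ) ∂m - ∫ x, p.eval x ∂m| ≤ ε' * (m Set.univ).toReal := by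
        intro m _ hm
        rw [← integral_sub (hfi m) (integrable_poly_aux m hm p)]
        calc |∫ x, ((f x : ℝ) - p.eval x) ∂m| ≤ ∫ x, |(f x : ℝ) - p.eval x| ∂m :=
            by simpa [Real.norm_eq_abs] using
              norm_integral_le_integral_norm (μ := m) (fun x => (f x : ℝ) - p.eval x)
          _ ≤ ∫ _x, ε' ∂m := by
              refine integral_mono_ae ((hfi m).sub (integrable_poly_aux m hm p)).abs
                (integrable_const _) ?_
              filter_upwards [hm] with x hx
              exact hnear x hx
          _ = ε' * (m Set.univ).toReal := by simp [mul_comm, Measure.real]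
      have e1 := est μ' haeμ'
      have e2 := est ν' haeν'
      have hpeq := hpoly p
      calc |∫ x, (f x : ℝ) ∂μ' - ∫ x, (f x : ℝ) ∂ν'|
          = |(∫ x, (f x : ℝ) ∂μ' - ∫ x, p.eval x ∂μ') -
              (∫ x, (f x : ℝ) ∂ν' - ∫ x, p.eval x ∂ν')| := by rw [hpeq]; ring_nf
        _ ≤ |∫ x, (f x : ℝ) ∂μ' - ∫ x, p.eval x ∂μ'| +
              |∫ x, (f x : ℝ) ∂ν' - ∫ x, p.eval x ∂ν'| := abs_sub _ _
        _ ≤ ε' * (μ' Set.univ).toReal + ε' * (ν' Set.univ).toReal := add_le_add e1 e2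
        _ = ε' * M := by rw [hM]; ring
        _ ≤ ε' * (M + 1) := by nlinarith
        _ = ε := by rw [hε'def]; field_simp [show M + 1 ≠ 0 by positivity]
    have : |∫ x, (f x : ℝ) ∂μ' - ∫ x, (f x : ℝ) ∂ν'| ≤ 0 :=
      le_of_forall_pos_le_add (by simpa using fun ε hε => (key ε hε).trans (by linarith))
    have := abs_nonpos_iff.mp this
    linarith [sub_eq_zero.mp this, this]
  -- pull back along the embedding T
  have hembed : MeasurableEmbedding T := hTmeas.measurableEmbedding hTinj
  ext s hs
  have h1 : μ s = μ' (T '' s) := by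
    rw [hμ', hembed.map_apply, hTinj.preimage_image]
  have h2 : ν s = ν' (T '' s) := by
    rw [hν', hembed.map_apply, hTinj.preimage_image]
  rw [h1, h2, hmain]


lemma laplace_gamma {a ρ s : ℝ} (ha : 0 < a) (hρ : 0 < ρ) (hs : 0 ≤ s) :
    ∫⁻ x, ENNReal.ofReal (Real.exp (-(s * x))) ∂(gammaMeasure a ρ) =
      ENNReal.ofReal ((ρ / (ρ + s)) ^ a) := by
  have hρs : 0 < ρ + s := by linarith
  have hgm : gammaMeasure a ρ = volume.withDensity (gammaPDF a ρ) := rfl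
  rw [hgm, lintegral_withDensity_eq_lintegral_mul _ (show Measurable (gammaPDF a ρ) from (measurable_gammaPDFReal a ρ).ennreal_ofReal)
    (by exact ((measurable_const.mul measurable_id').neg.exp).ennreal_ofReal)]
  have hpt : ∀ x : ℝ, (gammaPDF a ρ * fun x => ENNReal.ofReal (Real.exp (-(s * x)))) x =
      ENNReal.ofReal ((ρ / (ρ + s)) ^ a) * gammaPDF a (ρ + s) x := by
    intro x
    simp only [Pi.mul_apply]
    rcases lt_or_ge x 0 with hx | hx
    · rw [gammaPDF_of_neg hx, gammaPDF_of_neg hx, zero_mul, mul_zero]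
    · rw [gammaPDF_of_nonneg hx, gammaPDF_of_nonneg hx,
        ← ENNReal.ofReal_mul (by positivity), ← ENNReal.ofReal_mul (by positivity)]
      congr 1
      have h1 : (ρ / (ρ + s)) ^ a * (ρ + s) ^ a = ρ ^ a := by
        rw [← Real.mul_rpow (by positivity) (by positivity), div_mul_cancel₀ _ hρs.ne']
      have h2 : Real.exp (-(ρ * x)) * Real.exp (-(s * x)) = Real.exp (-((ρ + s) * x)) := by
        rw [← Real.exp_add]; ring_nf
      rw [← h1, ← h2]
      ring
  rw [lintegral_congr hpt, lintegral_const_mul _ (show Measurable (gammaPDF a (ρ+s)) from (measurable_gammaPDFReal a (ρ+s)).ennreal_ofReal),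
    lintegral_gammaPDF_eq_one ha hρs, mul_one]


lemma laplace_gauss_quad {s lam m : ℝ} (hs : 0 ≤ s) (hlam : 0 < lam) (hm : 0 ≤ m) :
    ∫⁻ x, ENNReal.ofReal (Real.exp (-(s * (Real.sqrt m + x / Real.sqrt (2 * lam)) ^ 2)))
        ∂(gaussianReal 0 1) =
      ENNReal.ofReal ((1 + s / lam) ^ (-(1/2) : ℝ) * Real.exp (-(s / (1 + s / lam) * m))) := by
  set c : ℝ := (Real.sqrt (2 * lam))⁻¹ with hc
  have h2lam : (0:ℝ) < 2 * lam := by linarith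
  have hc2 : c ^ 2 = (2 * lam)⁻¹ := by
    rw [hc, ← Real.sqrt_inv, Real.sq_sqrt (by positivity)]
  have hcpos : 0 < c := by rw [hc]; positivity
  set u : ℝ := Real.sqrt m with hu
  have hu2 : u ^ 2 = m := Real.sq_sqrt hm
  set A : ℝ := s * c ^ 2 + 1 / 2 with hA
  have hApos : 0 < A := by rw [hA]; positivity
  set n₀ : ℝ := -(s * c * u) / A with hn₀
  set K : ℝ := s * u ^ 2 / (2 * A) with hK
  set E : ℝ → ℝ := fun x => Real.exp (-(s * (u + x / Real.sqrt (2 * lam)) ^ 2)) with hE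
  have hEmeas : Measurable E := by
    apply Measurable.exp; fun_prop
  have hE01 : ∀ x, 0 ≤ E x ∧ E x ≤ 1 := by
    intro x
    exact ⟨(Real.exp_pos _).le, Real.exp_le_one_iff.2 (neg_nonpos.2 (by positivity))⟩
  -- reduce to a Lebesgue integral against the Gaussian density
  rw [gaussianReal_of_var_ne_zero 0 one_ne_zero,
    lintegral_withDensity_eq_lintegral_mul _
      (show Measurable (gaussianPDF 0 1) from (measurable_gaussianPDFReal 0 1).ennreal_ofReal)
      hEmeas.ennreal_ofReal]
  have hpt : ∀ x : ℝ, (gaussianPDF 0 1 * fun x => ENNReal.ofReal (E x)) x =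
      ENNReal.ofReal (gaussianPDFReal 0 1 x * E x) := by
    intro x
    simp only [Pi.mul_apply, gaussianPDF]
    rw [← ENNReal.ofReal_mul (gaussianPDFReal_nonneg 0 1 x)]
  rw [lintegral_congr hpt]
  have hInt : Integrable (fun x => gaussianPDFReal 0 1 x * E x) := by
    refine (integrable_gaussianPDFReal 0 1).mono'
      ((measurable_gaussianPDFReal 0 1).mul hEmeas).aestronglyMeasurable ?_
    refine Filter.Eventually.of_forall fun x => ?_
    rw [Real.norm_eq_abs, abs_mul, abs_of_nonneg (gaussianPDFReal_nonneg 0 1 x),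
      abs_of_nonneg (hE01 x).1]
    calc gaussianPDFReal 0 1 x * E x ≤ gaussianPDFReal 0 1 x * 1 :=
          mul_le_mul_of_nonneg_left (hE01 x).2 (gaussianPDFReal_nonneg 0 1 x)
      _ = gaussianPDFReal 0 1 x := mul_one _
  rw [← ofReal_integral_eq_lintegral_ofReal hInt (Filter.Eventually.of_forall fun x =>
    mul_nonneg (gaussianPDFReal_nonneg 0 1 x) (hE01 x).1)]
  -- compute the real integral by completing the square
  have hAne : s * c ^ 2 + 1 / 2 ≠ 0 := by positivity
  have hxc : ∀ x : ℝ, x / Real.sqrt (2 * lam) = x * c := fun x => by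
    rw [hc, div_eq_mul_inv]
  have hpdf : ∀ x : ℝ, gaussianPDFReal 0 1 x * E x =
      (Real.sqrt (2 * π))⁻¹ * (Real.exp (-(A * (x - n₀) ^ 2)) * Real.exp (-K)) := by
    intro x
    simp only [hE, gaussianPDFReal, NNReal.coe_one, mul_one, sub_zero]
    rw [mul_assoc, ← Real.exp_add, ← Real.exp_add]
    congr 2
    rw [hxc]
    rw [hn₀, hK, hA]
    field_simp
    ring
  simp_rw [hpdf]
  rw [integral_const_mul, integral_mul_const,
    integral_sub_right_eq_self (fun x => Real.exp (-(A * x ^ 2))) n₀]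
  have hgauss : ∫ x : ℝ, Real.exp (-(A * x ^ 2)) = Real.sqrt (π / A) := by
    simp_rw [neg_mul_eq_neg_mul]
    exact integral_gaussian A
  rw [hgauss]
  congr 1
  have h2A : 2 * A = 1 + s / lam := by
    rw [hA, hc2]
    field_simp
    ring
  have hKeq : K = s / (1 + s / lam) * m := by
    rw [hK, hu2, ← h2A]
    ring
  have hpow : (Real.sqrt (2 * π))⁻¹ * Real.sqrt (π / A) = (1 + s / lam) ^ (-(1/2) : ℝ) := by
    rw [← h2A, Real.rpow_neg (by positivity), ← Real.sqrt_eq_rpow, ← Real.sqrt_inv]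
    rw [← Real.sqrt_inv, ← Real.sqrt_mul (by positivity)]
    congr 1
    field_simp
  rw [← hpow, ← hKeq]
  ring


lemma gammaMeasure_Iio_zero (a ρ : ℝ) : gammaMeasure a ρ (Set.Iio 0) = 0 := by
  have h : gammaMeasure a ρ = volume.withDensity (gammaPDF a ρ) := rfl
  rw [h, withDensity_apply _ measurableSet_Iio]
  exact lintegral_gammaPDF_of_nonpos le_rfl

/-- **Gamma input gives gamma output in the quadratic gamma channel.** Let `α ≥ 1/2`,
`λ > 0`, `r > 0`. If `X ~ Gamma(α, λ₁)`, then
`X_r = G + (√(rX) + N/√(2λ))²` is gamma distributed with shape `α` and rate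
`λ_r = (r/λ₁ + 1/λ)⁻¹`, where `G ~ Gamma(α-1/2, λ)` and `N` is standard Gaussian, with
`X, G, N` mutually independent. -/
theorem gamma_input_gamma_output
    {Ω : Type*} [MeasureSpace Ω] [IsProbabilityMeasure (ℙ : Measure Ω)]
    (α lam lam₁ r : ℝ) (hα : 1 / 2 ≤ α) (hlam : 0 < lam) (hlam₁ : 0 < lam₁) (hr : 0 < r)
    (X G N : Ω → ℝ) (hXmeas : Measurable X) (hGmeas : Measurable G)
    (hNmeas : Measurable N)
    (hindep : iIndepFun ![X, G, N] ℙ)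
    (hX : Measure.map X ℙ = gammaMeasure α lam₁)
    (hG : Measure.map G ℙ = gammaMeasure (α - 1 / 2) lam)
    (hN : Measure.map N ℙ = gaussianReal 0 1)
    (Xr : Ω → ℝ)
    (hXr : Xr = fun ω => G ω + (Real.sqrt (r * X ω) + N ω / Real.sqrt (2 * lam)) ^ 2) :
    Measure.map Xr ℙ = gammaMeasure α (r / lam₁ + 1 / lam)⁻¹ := by
  subst hXr
  have hα0 : 0 < α := by linarith
  -- the degenerate case `α = 1/2` contradicts `hG`
  rcases eq_or_lt_of_le hα with hhalf | hαgt
  · exfalso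
    have h0 : α - 1 / 2 = 0 := by linarith
    have hzero : gammaPDF (α - 1 / 2) lam = fun _ => 0 := by
      funext x
      rw [h0, gammaPDF_eq]
      simp [Real.Gamma_zero]
    have h1 : Measure.map G ℙ Set.univ = 1 := by
      rw [Measure.map_apply hGmeas MeasurableSet.univ]
      simp
    rw [hG] at h1
    have h2 : gammaMeasure (α - 1 / 2) lam Set.univ = 0 := by
      have h : gammaMeasure (α - 1 / 2) lam = volume.withDensity (gammaPDF (α - 1 / 2) lam) := rfl
      rw [h, withDensity_apply _ MeasurableSet.univ, hzero]
      simp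
    rw [h2] at h1
    exact zero_ne_one h1
  have hα2 : 0 < α - 1 / 2 := by linarith
  set lamr : ℝ := (r / lam₁ + 1 / lam)⁻¹ with hlamr
  have hlamr0 : 0 < lamr := by rw [hlamr]; positivity
  set Q : Ω → ℝ := fun ω => (Real.sqrt (r * X ω) + N ω / Real.sqrt (2 * lam)) ^ 2 with hQ
  have hQmeas : Measurable Q := by
    apply Measurable.pow_const
    exact (Real.continuous_sqrt.measurable.comp (hXmeas.const_mul r)).add (hNmeas.div_const _)
  have hXrmeas : Measurable (fun ω => G ω + Q ω) := hGmeas.add hQmeas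
  haveI hprob1 : IsProbabilityMeasure (Measure.map (fun ω => G ω + Q ω) ℙ) :=
    Measure.isProbabilityMeasure_map hXrmeas.aemeasurable
  haveI hprob2 : IsProbabilityMeasure (gammaMeasure α lamr) :=
    isProbabilityMeasure_gammaMeasure hα0 hlamr0
  -- independence facts
  have hmeasi : ∀ i, Measurable (![X, G, N] i) := by
    intro i
    fin_cases i <;> simpa
  have hGQ : IndepFun G Q ℙ := by
    have h1 := hindep.indepFun_prodMk hmeasi 0 2 1 (by decide) (by decide)
    have h2 : IndepFun (fun ω => (X ω, N ω)) G ℙ := by simpa using h1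
    exact (h2.comp (measurable_fst.const_mul r |>.sqrt.add (measurable_snd.div_const _)
      |>.pow_const 2) measurable_id).symm
  have hXN : Measure.map (fun ω => (X ω, N ω)) ℙ =
      (gammaMeasure α lam₁).prod (gaussianReal 0 1) := by
    rw [← hX, ← hN]
    have h2 : IndepFun X N ℙ := by
      simpa using hindep.indepFun (show (0 : Fin 3) ≠ 2 by decide)
    exact (indepFun_iff_map_prod_eq_prod_map_map hXmeas.aemeasurable hNmeas.aemeasurable).1 h2
  -- Laplace transforms agree
  apply laplace_unique
  · rw [Measure.map_apply hXrmeas measurableSet_Iio]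
    refine measure_mono_null (fun ω hω => ?_) (show ℙ (G ⁻¹' Set.Iio 0) = 0 from ?_)
    · have h0 : 0 ≤ Q ω := sq_nonneg _
      simp only [Set.mem_preimage, Set.mem_Iio] at hω ⊢
      linarith
    · rw [← Measure.map_apply hGmeas measurableSet_Iio, hG, gammaMeasure_Iio_zero]
  · exact gammaMeasure_Iio_zero _ _
  intro n
  set s : ℝ := (n : ℝ) with hsdef
  have hs : 0 ≤ s := Nat.cast_nonneg n
  have hms : Measurable fun x : ℝ => ENNReal.ofReal (Real.exp (-(s * x))) :=
    ((measurable_const.mul measurable_id').neg.exp).ennreal_ofReal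
  rw [laplace_gamma hα0 hlamr0 hs]
  rw [lintegral_map hms hXrmeas]
  have hsplit : ∀ ω, ENNReal.ofReal (Real.exp (-(s * (G ω + Q ω)))) =
      ENNReal.ofReal (Real.exp (-(s * G ω))) * ENNReal.ofReal (Real.exp (-(s * Q ω))) := by
    intro ω
    rw [← ENNReal.ofReal_mul (Real.exp_pos _).le, ← Real.exp_add]
    congr 2
    ring
  simp only [hsplit]
  have hfg : IndepFun (fun ω => ENNReal.ofReal (Real.exp (-(s * G ω))))
      (fun ω => ENNReal.ofReal (Real.exp (-(s * Q ω)))) ℙ := hGQ.comp hms hms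
  have hmul : (∫⁻ a, ENNReal.ofReal (Real.exp (-(s * G a))) *
        ENNReal.ofReal (Real.exp (-(s * Q a))) ∂ℙ) =
      (∫⁻ ω, ENNReal.ofReal (Real.exp (-(s * G ω))) ∂ℙ) *
        ∫⁻ ω, ENNReal.ofReal (Real.exp (-(s * Q ω))) ∂ℙ :=
    lintegral_mul_eq_lintegral_mul_lintegral_of_indepFun
      (hms.comp hGmeas) (hms.comp hQmeas) hfg
  rw [hmul]
  -- first factor : Laplace transform of G
  have hfac1 : ∫⁻ ω, ENNReal.ofReal (Real.exp (-(s * G ω))) ∂ℙ =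
      ENNReal.ofReal ((lam / (lam + s)) ^ (α - 1 / 2)) := by
    rw [← lintegral_map hms hGmeas, hG, laplace_gamma hα2 hlam hs]
  -- second factor : Laplace transform of Q
  set s₂ : ℝ := s / (1 + s / lam) * r with hs₂
  have hs₂0 : 0 ≤ s₂ := by positivity
  have hc₁0 : (0:ℝ) ≤ (1 + s / lam) ^ (-(1/2) : ℝ) := by positivity
  have hfac2 : ∫⁻ ω, ENNReal.ofReal (Real.exp (-(s * Q ω))) ∂ℙ =
      ENNReal.ofReal ((1 + s / lam) ^ (-(1/2) : ℝ)) *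
        ENNReal.ofReal ((lam₁ / (lam₁ + s₂)) ^ α) := by
    have hmq : Measurable fun p : ℝ × ℝ =>
        ENNReal.ofReal (Real.exp (-(s * (Real.sqrt (r * p.1) + p.2 / Real.sqrt (2 * lam)) ^ 2))) := by
      apply Measurable.ennreal_ofReal
      apply Measurable.exp
      fun_prop
    have h1 : ∫⁻ ω, ENNReal.ofReal (Real.exp (-(s * Q ω))) ∂ℙ =
        ∫⁻ p : ℝ × ℝ, ENNReal.ofReal
          (Real.exp (-(s * (Real.sqrt (r * p.1) + p.2 / Real.sqrt (2 * lam)) ^ 2)))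
          ∂((gammaMeasure α lam₁).prod (gaussianReal 0 1)) := by
      rw [← hXN, lintegral_map hmq (hXmeas.prodMk hNmeas)]
    rw [h1, lintegral_prod _ hmq.aemeasurable]
    have hae : ∀ᵐ x ∂(gammaMeasure α lam₁), (0:ℝ) ≤ x := by
      rw [ae_iff]
      simpa [Set.Iio] using gammaMeasure_Iio_zero α lam₁
    have hcongr : ∀ᵐ x ∂(gammaMeasure α lam₁),
        (∫⁻ y, ENNReal.ofReal
          (Real.exp (-(s * (Real.sqrt (r * x) + y / Real.sqrt (2 * lam)) ^ 2)))
          ∂(gaussianReal 0 1)) =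
        ENNReal.ofReal ((1 + s / lam) ^ (-(1/2) : ℝ)) *
          ENNReal.ofReal (Real.exp (-(s₂ * x))) := by
      filter_upwards [hae] with x hx
      rw [laplace_gauss_quad hs hlam (by positivity : (0:ℝ) ≤ r * x),
        ENNReal.ofReal_mul hc₁0]
      congr 3
      rw [hs₂]
      ring
    have hms₂ : Measurable fun x : ℝ => ENNReal.ofReal (Real.exp (-(s₂ * x))) :=
      ((measurable_const.mul measurable_id').neg.exp).ennreal_ofReal
    rw [lintegral_congr_ae hcongr, lintegral_const_mul _ hms₂,
      laplace_gamma hα0 hlam₁ hs₂0]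
  rw [hfac1, hfac2]
  -- final algebraic identity
  rw [← mul_assoc, ← ENNReal.ofReal_mul (by positivity), ← ENNReal.ofReal_mul (by positivity)]
  congr 1
  have hBpos : (0:ℝ) < 1 + s / lam := by positivity
  have hT : lam / (lam + s) = (1 + s / lam)⁻¹ := by
    field_simp
  have hCpos : (0:ℝ) < lam₁ / (lam₁ + s₂) := by positivity
  have e1 : (lam / (lam + s)) ^ (α - 1 / 2) * (1 + s / lam) ^ (-(1/2) : ℝ) =
      (1 + s / lam) ^ (-α) := by
    rw [hT, Real.inv_rpow hBpos.le, ← Real.rpow_neg hBpos.le, ← Real.rpow_add hBpos]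
    congr 1
    ring
  have e2 : (1 + s / lam) ^ (-α) * (lam₁ / (lam₁ + s₂)) ^ α =
      ((1 + s / lam)⁻¹ * (lam₁ / (lam₁ + s₂))) ^ α := by
    rw [Real.rpow_neg hBpos.le, ← Real.inv_rpow hBpos.le,
      ← Real.mul_rpow (inv_nonneg.2 hBpos.le) hCpos.le]
  have e3 : (1 + s / lam)⁻¹ * (lam₁ / (lam₁ + s₂)) = lamr / (lamr + s) := by
    have h1 : (0:ℝ) < lam₁ + s₂ := by positivity
    have h2 : (0:ℝ) < lamr + s := by positivity
    rw [hs₂] at h1 ⊢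
    rw [hlamr] at h2 ⊢
    field_simp
    ring
  rw [e1, e2, e3]
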